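/- Let n ≥ 2 be an integer and let C₀ ≥ 0. Let ε ∈ (0,1) and γ ∈ [0,1) be such that 1 − γ − ε/(2(n−1)²) > 0, and set k = 1/((n−1)·√(1 − γ − ε/(2(n−1)²))), so that k⁻² − (1−γ)(n−1)² = −ε/2. Let B > 0 satisfy B² ≥ 100·C₀ and B ≥ √ε, and set σ_* = B/√ε (so σ_* ≥ 1). Let G : [1,∞) → ℝ be any function satisfying |σ²·G(σ) − k⁻²| ≤ C₀·σ⁻² for all σ ≥ 1. Then G(σ_*) > (1−γ)(n−1)²·σ_*⁻² − B²·σ_*⁻⁴ and G(3σ_*) < (1−γ)(n−1)²·(3σ_*)⁻² − B²·(3σ_*)⁻⁴. -/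

import Mathlib

open Real Set Filter

/-- Gluing comparison at the matching radii `σ_* = B/√ε` and `3σ_*`: if
`k = 1/((n-1)√(1-γ-ε/(2(n-1)²)))` and `G` satisfies `|σ²G(σ) - k⁻²| ≤ C₀σ⁻²` for `σ ≥ 1`,
then `G(σ_*) > (1-γ)(n-1)²σ_*⁻² - B²σ_*⁻⁴` and `G(3σ_*) < (1-γ)(n-1)²(3σ_*)⁻² - B²(3σ_*)⁻⁴`. -/
theorem stmt9 (n : ℕ) (hn : 2 ≤ n) (C₀ : ℝ) (hC₀ : 0 ≤ C₀)
    (ε γ : ℝ) (hε : ε ∈ Ioo (0:ℝ) 1) (hγ : γ ∈ Ico (0:ℝ) 1)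
    (hpos : 0 < 1 - γ - ε / (2 * ((n:ℝ) - 1)^2))
    (k : ℝ)
    (hk : k = 1 / (((n:ℝ) - 1) * Real.sqrt (1 - γ - ε / (2 * ((n:ℝ) - 1)^2))))
    (B : ℝ) (hB1 : 100 * C₀ ≤ B^2) (hB2 : Real.sqrt ε ≤ B)
    (G : ℝ → ℝ)
    (hG : ∀ σ : ℝ, 1 ≤ σ → |σ^2 * G σ - 1 / k^2| ≤ C₀ / σ^2) :
    (1 - γ) * ((n:ℝ) - 1)^2 / (B / Real.sqrt ε)^2 - B^2 / (B / Real.sqrt ε)^4 <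
      G (B / Real.sqrt ε) ∧
    G (3 * (B / Real.sqrt ε)) <
      (1 - γ) * ((n:ℝ) - 1)^2 / (3 * (B / Real.sqrt ε))^2 -
        B^2 / (3 * (B / Real.sqrt ε))^4 := by
  obtain ⟨hε0, hε1⟩ := hε
  have hn1 : (1:ℝ) ≤ (n:ℝ) - 1 := by
    have : (2:ℝ) ≤ (n:ℝ) := by exact_mod_cast hn
    linarith
  set q : ℝ := 1 - γ - ε / (2 * ((n:ℝ) - 1)^2) with hq
  have hs : 0 < Real.sqrt ε := Real.sqrt_pos.2 hε0
  have hsq : Real.sqrt ε ^ 2 = ε := Real.sq_sqrt hε0.le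
  have hB0 : 0 < B := lt_of_lt_of_le hs hB2
  set σ : ℝ := B / Real.sqrt ε with hσ
  have hσ1 : 1 ≤ σ := (one_le_div hs).2 hB2
  have hσ0 : 0 < σ := lt_of_lt_of_le one_pos hσ1
  have hkey : σ ^ 2 * ε = B ^ 2 := by
    rw [hσ, div_pow, hsq, div_mul_cancel₀ _ hε0.ne']
  set A : ℝ := (1 - γ) * ((n:ℝ) - 1)^2 with hA
  have hk2 : 1 / k ^ 2 = A - ε / 2 := by
    rw [hk, div_pow, one_pow, one_div_one_div, mul_pow, Real.sq_sqrt hpos.le]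
    have h2 : ((n:ℝ) - 1)^2 ≠ 0 := by positivity
    field_simp [hA, hq]
    have e : q * (2 * ((n:ℝ) - 1)^2) = (1 - γ) * (2 * ((n:ℝ) - 1)^2) - ε := by
      rw [hq, sub_mul, div_mul_cancel₀ _ (mul_ne_zero two_ne_zero h2)]
    linear_combination e - 2 * hA
  -- first inequality
  have hσ2 : (0:ℝ) < σ ^ 2 := by positivity
  have hσ4 : (0:ℝ) < σ ^ 4 := by positivity
  constructor
  · have h1 := (abs_le.1 (hG σ hσ1)).1
    rw [hk2] at h1
    have h1' : -C₀ ≤ (σ ^ 2 * G σ - (A - ε / 2)) * σ ^ 2 := by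
      have := mul_le_mul_of_nonneg_right h1 hσ2.le
      rwa [neg_mul, div_mul_cancel₀ _ hσ2.ne'] at this
    have hrw : A / σ ^ 2 - B ^ 2 / σ ^ 4 = (A * σ ^ 2 - B ^ 2) / σ ^ 4 := by
      field_simp
    rw [hrw, div_lt_iff₀ hσ4]
    have hB2p : (0:ℝ) < B ^ 2 := by positivity
    linarith [h1', hkey, hB1, hB2p]
  · set τ : ℝ := 3 * σ with hτ
    have hτ1 : 1 ≤ τ := by rw [hτ]; linarith
    have hτ2 : (0:ℝ) < τ ^ 2 := by positivity
    have hτ4 : (0:ℝ) < τ ^ 4 := by positivity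
    have hkey2 : τ ^ 2 * ε = 9 * B ^ 2 := by
      rw [hτ]; nlinarith [hkey]
    have h1 := (abs_le.1 (hG τ hτ1)).2
    rw [hk2] at h1
    have h1' : (τ ^ 2 * G τ - (A - ε / 2)) * τ ^ 2 ≤ C₀ := by
      have := mul_le_mul_of_nonneg_right h1 hτ2.le
      rwa [div_mul_cancel₀ _ hτ2.ne'] at this
    have hrw : A / τ ^ 2 - B ^ 2 / τ ^ 4 = (A * τ ^ 2 - B ^ 2) / τ ^ 4 := by
      field_simp
    rw [hrw, lt_div_iff₀ hτ4]
    have hB2p : (0:ℝ) < B ^ 2 := by positivity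
    linarith [h1', hkey2, hB1, hB2p]
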